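/- For every u ∈ (0,1) there exists a constant c depending only on u such that for all integers d ≥ 2 and X = d^u, the set G_d†(X) = {(a0,...,a3) ∈ G_d : d > max_i gcd(d, a_i) > X} satisfies |G_d†(X)| ≤ c · d^{-u/2} · |G_d|, where G_d = {a ∈ (ℤ/dℤ)^4 : Σ a_i = 0} has cardinality d^3. -/

import Mathlib

open Finset



lemma exists_tau_bound (v : ℝ) (hv : 0 < v) :
    ∃ c : ℝ, 0 < c ∧ ∀ n : ℕ, n ≠ 0 → (n.divisors.card : ℝ) ≤ c * (n : ℝ) ^ v := by
  have hlog : 0 < Real.log 2 := Real.log_pos one_lt_two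
  set C : ℝ := 1 + 1 / (v * Real.log 2) with hCdef
  have hC1 : 1 ≤ C := le_add_of_nonneg_right (by positivity)
  set B : ℕ := ⌈(2:ℝ) ^ (1/v)⌉₊ with hBdef
  refine ⟨C ^ (B+1), by positivity, ?_⟩
  intro n hn
  have key : ∀ p ∈ n.primeFactors,
      ((n.factorization p + 1 : ℕ) : ℝ)
        ≤ (if p ≤ B then C else 1) * (p:ℝ) ^ ((n.factorization p : ℝ) * v) := by
    intro p hp
    have hp' : p.Prime := Nat.prime_of_mem_primeFactors hp
    have hp2 : (2:ℝ) ≤ (p:ℝ) := by exact_mod_cast hp'.two_le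
    set a : ℕ := n.factorization p with hadef
    have hav : 0 ≤ (a:ℝ) * v := by positivity
    by_cases hpB : p ≤ B
    · simp only [hpB, if_true]
      have h2 : (2:ℝ) ^ ((a:ℝ)*v) ≤ (p:ℝ) ^ ((a:ℝ)*v) :=
        Real.rpow_le_rpow (by norm_num) hp2 hav
      have h3 : 1 + (a:ℝ)*v*Real.log 2 ≤ (2:ℝ)^((a:ℝ)*v) := by
        rw [Real.rpow_def_of_pos (by norm_num)]
        have := Real.add_one_le_exp (Real.log 2 * ((a:ℝ)*v))
        nlinarith
      have h4 : ((a:ℕ):ℝ) + 1 ≤ C * (1 + (a:ℝ)*v*Real.log 2) := by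
        have hCv : C * (v * Real.log 2) = v * Real.log 2 + 1 := by
          rw [hCdef, add_mul, one_div, inv_mul_cancel₀ (mul_pos hv hlog).ne', one_mul]
        nlinarith [mul_nonneg (Nat.cast_nonneg a) hlog.le, Nat.cast_nonneg (α := ℝ) a]
      calc ((a + 1 : ℕ) : ℝ) = (a:ℝ) + 1 := by push_cast; ring
        _ ≤ C * (1 + (a:ℝ)*v*Real.log 2) := h4
        _ ≤ C * (2:ℝ)^((a:ℝ)*v) := by
            apply mul_le_mul_of_nonneg_left h3 (by linarith)
        _ ≤ C * (p:ℝ)^((a:ℝ)*v) := by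
            apply mul_le_mul_of_nonneg_left h2 (by linarith)
    · simp only [hpB, if_false, one_mul]
      have hpv : (2:ℝ) ≤ (p:ℝ) ^ v := by
        have h1 : (2:ℝ)^(1/v) ≤ (B:ℝ) := Nat.le_ceil _
        have h2 : ((B:ℕ):ℝ) ≤ (p:ℝ) := by exact_mod_cast Nat.le_of_not_le hpB
        have h3 : (2:ℝ)^(1/v) ≤ (p:ℝ) := le_trans h1 h2
        calc (2:ℝ) = ((2:ℝ)^(1/v))^v := by
              rw [← Real.rpow_mul (by norm_num : (0:ℝ) ≤ 2), one_div,
                inv_mul_cancel₀ hv.ne', Real.rpow_one]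
          _ ≤ (p:ℝ)^v := Real.rpow_le_rpow (by positivity) h3 hv.le
      have := Nat.lt_two_pow_self (n := a)
      calc ((a + 1 : ℕ) : ℝ) ≤ ((2^a : ℕ) : ℝ) := by exact_mod_cast Nat.lt_two_pow_self (n := a)
        _ = (2:ℝ)^a := by push_cast; ring
        _ ≤ ((p:ℝ)^v)^a := pow_le_pow_left₀ (by norm_num) hpv a
        _ = (p:ℝ)^((a:ℝ)*v) := by
            rw [← Real.rpow_natCast ((p:ℝ)^v) a, ← Real.rpow_mul (by positivity)]
            ring_nf
  have h1 : (n.divisors.card : ℝ) = ∏ p ∈ n.primeFactors, ((n.factorization p + 1 : ℕ) : ℝ) := by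
    rw [Nat.card_divisors hn]
    push_cast
    rfl
  have h2 : (n.divisors.card : ℝ)
      ≤ ∏ p ∈ n.primeFactors, ((if p ≤ B then C else 1) * (p:ℝ) ^ ((n.factorization p : ℝ) * v)) := by
    rw [h1]
    exact Finset.prod_le_prod (fun p _ => by positivity) key
  rw [Finset.prod_mul_distrib] at h2
  have h3 : ∏ p ∈ n.primeFactors, (p:ℝ) ^ ((n.factorization p : ℝ) * v) = (n:ℝ) ^ v := by
    have : ∀ p ∈ n.primeFactors, (p:ℝ) ^ ((n.factorization p : ℝ) * v)
        = (((p ^ n.factorization p : ℕ)):ℝ) ^ v := by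
      intro p _
      rw [Real.rpow_mul (by positivity), Real.rpow_natCast]
      push_cast
      rfl
    rw [Finset.prod_congr rfl this, Real.finset_prod_rpow _ _ (fun p _ => by positivity)]
    congr 1
    rw [← Nat.cast_prod]
    congr 1
    exact Nat.factorization_prod_pow_eq_self hn
  have h4 : ∏ p ∈ n.primeFactors, (if p ≤ B then C else 1) ≤ C ^ (B+1) := by
    rw [Finset.prod_ite, Finset.prod_const, Finset.prod_const, one_pow, mul_one]
    apply pow_le_pow_right₀ hC1
    calc (n.primeFactors.filter (fun p => p ≤ B)).card
        ≤ (Finset.range (B+1)).card := Finset.card_le_card (by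
          intro p hp
          simp only [Finset.mem_filter] at hp
          simp [Nat.lt_succ_iff, hp.2])
      _ = B + 1 := Finset.card_range _
  calc (n.divisors.card : ℝ)
      ≤ (∏ p ∈ n.primeFactors, (if p ≤ B then C else 1)) * ((n:ℝ) ^ v) := by rw [← h3]; exact h2
    _ ≤ C ^ (B+1) * (n:ℝ) ^ v := by
        apply mul_le_mul_of_nonneg_right h4 (by positivity)


lemma slice_card {d : ℕ} [NeZero d] (P : ZMod d → Prop) [DecidablePred P] (i : Fin 4) :
    (Finset.univ.filter (fun a : Fin 4 → ZMod d => (∑ j, a j = 0) ∧ P (a i))).card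
      ≤ (Finset.univ.filter P).card * (d * d) := by
  classical
  set j : Fin 4 := if i = 0 then 1 else 0 with hj
  set k : Fin 4 := if i = 0 ∨ i = 1 then 2 else 1 with hk
  have hcard : ((Finset.univ.filter P) ×ˢ ((Finset.univ : Finset (ZMod d)) ×ˢ (Finset.univ : Finset (ZMod d)))).card
      = (Finset.univ.filter P).card * (d * d) := by
    simp [Finset.card_product, ZMod.card]
  rw [← hcard]
  apply Finset.card_le_card_of_injOn (fun a => (a i, a j, a k))
  · intro a ha
    simp only [Finset.mem_coe, Finset.mem_filter, Finset.mem_univ, true_and] at ha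
    simp [Finset.mem_product, ha.2]
  · intro a ha b hb h
    simp only [Finset.coe_filter, Set.mem_setOf_eq, Finset.mem_univ, true_and] at ha hb
    have hsa := ha.1
    have hsb := hb.1
    rw [Fin.sum_univ_four] at hsa hsb
    rw [Prod.mk.injEq, Prod.mk.injEq] at h
    obtain ⟨h1, h2, h3⟩ := h
    funext m
    fin_cases i <;> simp only [hj, hk] at h1 h2 h3 <;> norm_num at h1 h2 h3 <;>
      fin_cases m <;> simp_all <;> linear_combination hsa - hsb


lemma count_res {d : ℕ} [NeZero d] {X : ℝ} (hX0 : 0 < X) (hXd : X ≤ d) :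
    ((Finset.univ.filter (fun b : ZMod d => X < (Nat.gcd d b.val : ℝ))).card : ℝ)
      ≤ (d.divisors.card : ℝ) * (2 * d / X) := by
  classical
  have hd0 : d ≠ 0 := NeZero.ne d
  have hdR : (0:ℝ) < d := by
    have := Nat.pos_of_ne_zero hd0; exact_mod_cast this
  -- subset of union of multiples of large divisors
  have hsub : (Finset.univ.filter (fun b : ZMod d => X < (Nat.gcd d b.val : ℝ)))
      ⊆ (d.divisors.filter (fun g : ℕ => X < (g:ℝ))).biUnion
          (fun g => Finset.univ.filter (fun b : ZMod d => g ∣ b.val)) := by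
    intro b hb
    simp only [Finset.mem_filter, Finset.mem_univ, true_and] at hb
    rw [Finset.mem_biUnion]
    refine ⟨Nat.gcd d b.val, ?_, ?_⟩
    · simp only [Finset.mem_filter, Nat.mem_divisors]
      exact ⟨⟨Nat.gcd_dvd_left _ _, hd0⟩, hb⟩
    · simp [Nat.gcd_dvd_right d b.val]
  have hmult : ∀ g ∈ d.divisors.filter (fun g : ℕ => X < (g:ℝ)),
      ((Finset.univ.filter (fun b : ZMod d => g ∣ b.val)).card : ℝ) ≤ 2 * d / X := by
    intro g hg
    simp only [Finset.mem_filter, Nat.mem_divisors] at hg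
    obtain ⟨⟨hgd, -⟩, hgX⟩ := hg
    have hg0 : 0 < g := by
      rcases Nat.eq_zero_or_pos g with h | h
      · exfalso; rw [h] at hgX; simp at hgX; linarith
      · exact h
    have hcard : (Finset.univ.filter (fun b : ZMod d => g ∣ b.val)).card ≤ d / g + 1 := by
      rw [← Finset.card_range (d / g + 1)]
      apply Finset.card_le_card_of_injOn (fun b => b.val / g)
      · intro b hb
        simp only [Finset.mem_coe, Finset.mem_range]
        have : b.val / g ≤ d / g := Nat.div_le_div_right (le_of_lt (ZMod.val_lt b))
        omega
      · intro b hb c hc h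
        simp only [Finset.coe_filter, Set.mem_setOf_eq] at hb hc
        apply ZMod.val_injective
        have hb' : b.val = g * (b.val / g) := (Nat.mul_div_cancel' hb.2).symm
        have hc' : c.val = g * (c.val / g) := (Nat.mul_div_cancel' hc.2).symm
        simp only [] at h
        rw [hb', hc']
        exact congrArg (g * ·) h
    calc ((Finset.univ.filter (fun b : ZMod d => g ∣ b.val)).card : ℝ)
        ≤ ((d / g : ℕ) : ℝ) + 1 := by exact_mod_cast hcard
      _ ≤ (d:ℝ) / g + 1 := by
          have := Nat.cast_div_le (α := ℝ) (m := d) (n := g)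
          linarith
      _ ≤ (d:ℝ) / X + (d:ℝ) / X := by
          have h1 : (d:ℝ) / g ≤ (d:ℝ) / X :=
            div_le_div_of_nonneg_left hdR.le hX0 hgX.le
          have h2 : (1:ℝ) ≤ (d:ℝ) / X := (one_le_div hX0).mpr hXd
          linarith
      _ = 2 * d / X := by ring
  calc ((Finset.univ.filter (fun b : ZMod d => X < (Nat.gcd d b.val : ℝ))).card : ℝ)
      ≤ (((d.divisors.filter (fun g : ℕ => X < (g:ℝ))).biUnion
          (fun g => Finset.univ.filter (fun b : ZMod d => g ∣ b.val))).card : ℝ) := by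
        exact_mod_cast Finset.card_le_card hsub
    _ ≤ ∑ g ∈ d.divisors.filter (fun g : ℕ => X < (g:ℝ)),
          ((Finset.univ.filter (fun b : ZMod d => g ∣ b.val)).card : ℝ) := by
        exact_mod_cast Finset.card_biUnion_le
    _ ≤ ∑ _g ∈ d.divisors.filter (fun g : ℕ => X < (g:ℝ)), (2 * d / X) :=
        Finset.sum_le_sum hmult
    _ = ((d.divisors.filter (fun g : ℕ => X < (g:ℝ))).card : ℝ) * (2 * d / X) := by
        rw [Finset.sum_const, nsmul_eq_mul]
    _ ≤ (d.divisors.card : ℝ) * (2 * d / X) := by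
        apply mul_le_mul_of_nonneg_right
        · exact_mod_cast Finset.card_le_card (Finset.filter_subset _ _)
        · positivity


/-- For every `u ∈ (0,1)` there is a constant `c` (depending only on `u`) such that for all
`d ≥ 2`, with `X = d^u`, the set `G_d†(X) = {a ∈ G_d : d > maxᵢ gcd(d, aᵢ) > X}` satisfies
`|G_d†(X)| ≤ c · d^{-u/2} · |G_d|`, where `|G_d| = d³`. -/
theorem card_bad_set_le :
    ∀ u : ℝ, u ∈ Set.Ioo (0 : ℝ) 1 → ∃ c : ℝ, 0 < c ∧ ∀ d : ℕ, 2 ≤ d →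
      (Nat.card {a : Fin 4 → ZMod d // (∑ i, a i = 0) ∧
          (Finset.univ.sup (fun i => Nat.gcd d (a i).val) < d ∧
            (d : ℝ) ^ u < ((Finset.univ.sup (fun i => Nat.gcd d (a i).val) : ℕ) : ℝ))} : ℝ)
        ≤ c * (d : ℝ) ^ (-(u / 2)) * ((d : ℝ) ^ 3) := by
  intro u hu
  obtain ⟨hu0, hu1⟩ := hu
  obtain ⟨c₀, hc₀, htau⟩ := exists_tau_bound (u/2) (by linarith)
  refine ⟨8 * c₀, by positivity, ?_⟩
  intro d hd
  haveI : NeZero d := ⟨by omega⟩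
  classical
  have hdR : (0:ℝ) < d := by positivity
  have hd1 : (1:ℝ) ≤ (d:ℝ) := by exact_mod_cast (by omega : 1 ≤ d)
  set X : ℝ := (d:ℝ) ^ u with hXdef
  have hX0 : 0 < X := Real.rpow_pos_of_pos hdR u
  have hXd : X ≤ (d:ℝ) := by
    calc X ≤ (d:ℝ) ^ (1:ℝ) := Real.rpow_le_rpow_of_exponent_le hd1 hu1.le
      _ = (d:ℝ) := Real.rpow_one _
  set P : ZMod d → Prop := fun b => X < (Nat.gcd d b.val : ℝ) with hPdef
  set Q : (Fin 4 → ZMod d) → Prop := fun a => (∑ i, a i = 0) ∧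
      (Finset.univ.sup (fun i => Nat.gcd d (a i).val) < d ∧
        (d : ℝ) ^ u < ((Finset.univ.sup (fun i => Nat.gcd d (a i).val) : ℕ) : ℝ)) with hQdef
  have hcardQ : (Nat.card {a : Fin 4 → ZMod d // Q a} : ℝ)
      = ((Finset.univ.filter Q).card : ℝ) := by
    rw [Nat.card_eq_fintype_card, Fintype.card_subtype]
  rw [hcardQ]
  -- subset of union of slices
  have hsub : Finset.univ.filter Q ⊆ (Finset.univ : Finset (Fin 4)).biUnion
      (fun i => Finset.univ.filter (fun a : Fin 4 → ZMod d => (∑ j, a j = 0) ∧ P (a i))) := by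
    intro a ha
    simp only [Finset.mem_filter, Finset.mem_univ, true_and, hQdef] at ha
    obtain ⟨hsum, -, hX⟩ := ha
    obtain ⟨i, -, hi⟩ := Finset.exists_mem_eq_sup (Finset.univ : Finset (Fin 4))
      ⟨0, Finset.mem_univ 0⟩ (fun i => Nat.gcd d (a i).val)
    rw [Finset.mem_biUnion]
    refine ⟨i, Finset.mem_univ i, ?_⟩
    simp only [Finset.mem_filter, Finset.mem_univ, true_and, hPdef]
    refine ⟨hsum, ?_⟩
    rw [hi] at hX
    exact hX
  set N : ℕ := (Finset.univ.filter P).card with hNdef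
  have hslice : ∀ i : Fin 4,
      (Finset.univ.filter (fun a : Fin 4 → ZMod d => (∑ j, a j = 0) ∧ P (a i))).card
        ≤ N * (d * d) := fun i => slice_card P i
  have hcount : ((Finset.univ.filter Q).card : ℝ) ≤ 4 * ((N:ℝ) * ((d:ℝ) * d)) := by
    calc ((Finset.univ.filter Q).card : ℝ)
        ≤ ((((Finset.univ : Finset (Fin 4)).biUnion
            (fun i => Finset.univ.filter
              (fun a : Fin 4 → ZMod d => (∑ j, a j = 0) ∧ P (a i)))).card : ℕ) : ℝ) := by
          exact_mod_cast Finset.card_le_card hsub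
      _ ≤ ((∑ i : Fin 4, (Finset.univ.filter
              (fun a : Fin 4 → ZMod d => (∑ j, a j = 0) ∧ P (a i))).card : ℕ) : ℝ) := by
          exact_mod_cast Finset.card_biUnion_le
      _ ≤ ((∑ _i : Fin 4, N * (d * d) : ℕ) : ℝ) := by
          exact_mod_cast Finset.sum_le_sum (fun i _ => hslice i)
      _ = 4 * ((N:ℝ) * ((d:ℝ) * d)) := by
          push_cast
          simp [Finset.sum_const]
  have hN : (N:ℝ) ≤ (d.divisors.card : ℝ) * (2 * d / X) := count_res hX0 hXd
  have htau' : (d.divisors.card : ℝ) ≤ c₀ * (d:ℝ) ^ (u/2) := htau d (by omega)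
  have halg : (d:ℝ)^(u/2) * (2 * (d:ℝ) / X) * ((d:ℝ) * (d:ℝ))
      = 2 * ((d:ℝ)^(-(u/2)) * (d:ℝ)^3) := by
    have e : (d:ℝ)^(-(u/2)) = (d:ℝ)^(u/2) * (d:ℝ)^(-u) := by
      rw [← Real.rpow_add hdR]; congr 1; ring
    rw [hXdef, div_eq_mul_inv (2 * (d:ℝ)) ((d:ℝ)^u), ← Real.rpow_neg hdR.le, e]
    ring
  have h2dX : (0:ℝ) ≤ 2 * (d:ℝ) / X := by positivity
  calc ((Finset.univ.filter Q).card : ℝ)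
      ≤ 4 * ((N:ℝ) * ((d:ℝ) * d)) := hcount
    _ ≤ 4 * (((d.divisors.card : ℝ) * (2 * d / X)) * ((d:ℝ) * d)) := by gcongr
    _ ≤ 4 * (((c₀ * (d:ℝ) ^ (u/2)) * (2 * d / X)) * ((d:ℝ) * d)) := by gcongr
    _ = 8 * c₀ * (d : ℝ) ^ (-(u / 2)) * ((d : ℝ) ^ 3) := by linear_combination (4 * c₀) * halg
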